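/- For the unit disk, the weight (c(z+ζ)+d)^n (cz+d)^{-ν-n} action preserves polynomials of degree ≤ n in ζ: if Φ_z(ζ) is a polynomial of degree ≤ n in ζ for each z, then (g^{-β_ν}Φ)_z(ζ) = ((c(z+ζ)+d)^n/(cz+d)^{ν+n}) Φ_{g(z)}( ζ/((c(z+ζ)+d)(cz+d)) ) is again a polynomial of degree ≤ n in ζ. -/

import Mathlib

/-- For the unit disk and `g = [[a,b],[c,d]] ∈ SU(1,1)`, the action
`(g^{-β_ν}Φ)_z(ζ) = ((c(z+ζ)+d)^n/(cz+d)^{ν+n}) Φ_{g(z)}(ζ/((c(z+ζ)+d)(cz+d)))`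
preserves polynomials of degree ≤ n in ζ: if `Φ_w` is a polynomial of degree ≤ n for
each `w`, then `ζ ↦ (g^{-β_ν}Φ)_z(ζ)` agrees (where defined) with a polynomial of
degree ≤ n. (`ν+n` is an even integer so no branch issues arise.) -/
theorem stmt5 (n : ℕ) (ν : ℤ) (hν : Even (ν + n))
    (a b c d : ℂ)
    (hsu : d = starRingEnd ℂ a ∧ c = starRingEnd ℂ b ∧ a * d - b * c = 1)
    (z : ℂ) (hz : ‖z‖ < 1) (hden : c * z + d ≠ 0)
    (P : ℂ → Polynomial ℂ) (hdeg : ∀ w, (P w).natDegree ≤ n) :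
    ∃ Q : Polynomial ℂ, Q.natDegree ≤ n ∧
      ∀ ζ : ℂ, c * (z + ζ) + d ≠ 0 →
        (c * (z + ζ) + d) ^ (n : ℤ) / (c * z + d) ^ (ν + n) *
            (P ((a * z + b) / (c * z + d))).eval (ζ / ((c * (z + ζ) + d) * (c * z + d)))
          = Q.eval ζ := by
  set w : ℂ := (a * z + b) / (c * z + d) with hw
  set B : ℂ := c * z + d with hB
  refine ⟨Polynomial.C (B ^ (-(ν + n))) * ∑ k ∈ Finset.range (n + 1),
      Polynomial.C ((P w).coeff k * B ^ (-(k : ℤ))) * Polynomial.X ^ k *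
        (Polynomial.C c * Polynomial.X + Polynomial.C B) ^ (n - k), ?_, ?_⟩
  · refine le_trans (Polynomial.natDegree_mul_le) ?_
    simp only [Polynomial.natDegree_C, zero_add]
    refine le_trans (Polynomial.natDegree_sum_le _ _) ?_
    rw [Finset.fold_max_le]
    refine ⟨Nat.zero_le _, fun k hk => ?_⟩
    simp only [Finset.mem_range, Nat.lt_succ_iff] at hk
    refine le_trans (Polynomial.natDegree_mul_le) ?_
    have h1 : (Polynomial.C ((P w).coeff k * B ^ (-(k : ℤ))) * Polynomial.X ^ k).natDegree ≤ k :=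
      le_trans (Polynomial.natDegree_C_mul_le _ _) (le_of_eq (Polynomial.natDegree_X_pow k))
    have h2 : ((Polynomial.C c * Polynomial.X + Polynomial.C B) ^ (n - k)).natDegree ≤ n - k := by
      refine le_trans (Polynomial.natDegree_pow_le) ?_
      have : (Polynomial.C c * Polynomial.X + Polynomial.C B).natDegree ≤ 1 :=
        Polynomial.natDegree_linear_le
      calc (n - k) * (Polynomial.C c * Polynomial.X + Polynomial.C B).natDegree
          ≤ (n - k) * 1 := Nat.mul_le_mul_left _ this
        _ = n - k := by ring
    omega
  · intro ζ hA
    set A : ℂ := c * (z + ζ) + d with hAdef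
    have hAB : c * ζ + B = A := by rw [hAdef, hB]; ring
    rw [Polynomial.eval_eq_sum_range' (Nat.lt_succ_of_le (hdeg w))]
    simp only [Polynomial.eval_mul, Polynomial.eval_C, Polynomial.eval_finset_sum,
      Polynomial.eval_pow, Polynomial.eval_add, Polynomial.eval_X, hAB]
    rw [Finset.mul_sum, Finset.mul_sum]
    refine Finset.sum_congr rfl fun k hk => ?_
    simp only [Finset.mem_range, Nat.lt_succ_iff] at hk
    have hBz : B ≠ 0 := hden
    have hAz : A ≠ 0 := hA
    have hBp : B ^ (ν + n) ≠ 0 := zpow_ne_zero _ hBz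
    rw [zpow_neg, zpow_neg, zpow_natCast, zpow_natCast, div_pow, mul_pow,
      ← pow_sub_mul_pow A hk]
    field_simp
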